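/- Let H, K, M be Hilbert spaces, T ∈ B(H,K) and S ∈ B(K,M) generalized Weyl operators (closed range, dim ker = dim coker as cardinals), and suppose R(ST) is closed. Then ST is a generalized Weyl operator. -/

import Mathlib

open Submodule Function Cardinal

noncomputable section GWAux

universe w u₁ u₂ u₃ u₄ u

namespace GWAux

local notation "⟪" x ", " y "⟫" => @inner ℂ _ _ x y

section basics

variable {E : Type u₁} {F : Type u₂} [NormedAddCommGroup E] [InnerProductSpace ℂ E]
  [NormedAddCommGroup F] [InnerProductSpace ℂ F]

lemma hb_dense {ι : Type u₃} (b : HilbertBasis ι ℂ E) :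
    Dense ((span ℂ (Set.range (⇑b)) : Submodule ℂ E) : Set E) := by
  rw [dense_iff_closure_eq, ← Submodule.topologicalClosure_coe, b.dense_span]
  simp


lemma eq_zero_of_inner_dense {t : Set E}
    (hd : Dense ((span ℂ t : Submodule ℂ E) : Set E))
    {x : E} (h : ∀ y ∈ t, ⟪x, y⟫ = 0) : x = 0 := by
  have hker : span ℂ t ≤ LinearMap.ker (innerSL ℂ x : E →ₗ[ℂ] ℂ) := by
    rw [Submodule.span_le]
    intro z hz
    simpa using h z hz
  have heq : ⇑(innerSL ℂ x) = (fun _ : E => (0 : ℂ)) := by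
    refine Continuous.ext_on hd (innerSL ℂ x).continuous continuous_const ?_
    intro y hy
    simpa using hker hy
  have hx : ⟪x, x⟫ = 0 := by
    have := congrFun heq x
    simpa using this
  exact inner_self_eq_zero.mp hx


lemma eq_zero_of_inner_basis {ι : Type u₃} (b : HilbertBasis ι ℂ E) {x : E}
    (h : ∀ i, ⟪b i, x⟫ = 0) : x = 0 := by
  refine eq_zero_of_inner_dense (hb_dense b) ?_
  rintro y ⟨i, rfl⟩
  rw [← inner_eq_zero_symm]
  exact h i


lemma card_le_of_cle [CompleteSpace E] [CompleteSpace F] {ι : Type u₃} {ι' : Type u₄} [Infinite ι]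
    (b : HilbertBasis ι ℂ E) (c : HilbertBasis ι' ℂ F) (f : E ≃L[ℂ] F) :
    Cardinal.lift.{u₃} #ι' ≤ Cardinal.lift.{u₄} #ι := by
  classical
  set supp : ι → Set ι' := fun i => Function.support fun j => (c.repr (f (b i)) : ι' → ℂ) j
    with hsupp
  have hcount : ∀ i, (supp i).Countable := by
    intro i
    have hm : Memℓp (c.repr (f (b i)) : ι' → ℂ) 2 := lp.memℓp _
    have hs : Summable fun j => ‖(c.repr (f (b i)) : ι' → ℂ) j‖ ^ (2 : ENNReal).toReal :=
      hm.summable (by norm_num)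
    refine hs.countable_support.mono ?_
    intro j hj
    have hj' : (c.repr (f (b i)) : ι' → ℂ) j ≠ 0 := hj
    simp only [Function.mem_support, ne_eq]
    rw [Real.rpow_eq_zero (norm_nonneg _) (by norm_num)]
    simpa using hj'
  have hcover : ∀ j, ∃ i, (c.repr (f (b i)) : ι' → ℂ) j ≠ 0 := by
    intro j
    by_contra hcon
    push_neg at hcon
    have horth : ∀ i, ⟪c j, f (b i)⟫ = 0 := by
      intro i
      rw [← c.repr_apply_apply]
      exact hcon i
    -- the span of the image of the basis is dense
    have hdense : Dense ((span ℂ (Set.range (⇑f ∘ ⇑b)) : Submodule ℂ F) : Set F) := by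
      have h1 : Set.range (⇑f ∘ ⇑b) = ⇑f '' Set.range ⇑b := Set.range_comp _ _
      have h2 : span ℂ (⇑f '' Set.range ⇑b)
          = Submodule.map (f : E →ₗ[ℂ] F) (span ℂ (Set.range ⇑b)) :=
        (Submodule.span_image _).trans rfl
      rw [h1, h2]
      have h3 : (Submodule.map (f : E →ₗ[ℂ] F) (span ℂ (Set.range ⇑b)) : Set F)
          = ⇑f '' (span ℂ (Set.range ⇑b) : Set E) := rfl
      rw [h3, dense_iff_closure_eq, ← ContinuousLinearEquiv.coe_toHomeomorph f,
        ← Homeomorph.image_closure, (hb_dense b).closure_eq]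
      simp [Set.image_univ, f.surjective.range_eq]
    have hcj : c j = 0 := by
      refine eq_zero_of_inner_dense hdense ?_
      rintro y ⟨i, rfl⟩
      exact horth i
    have := c.orthonormal.1 j
    rw [hcj] at this
    simp at this
  choose I hI using hcover
  choose G hG using fun i => Set.countable_iff_exists_injOn.mp (hcount i)
  have hemb : Nonempty (ι' ↪ ι × ℕ) := by
    refine ⟨⟨fun j => (I j, G (I j) j), ?_⟩⟩
    intro j j' h
    have h1 : I j = I j' := congrArg Prod.fst h
    have h2' : G (I j) j = G (I j') j' := congrArg Prod.snd h
    rw [← h1] at h2'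
    refine hG (I j) ?_ ?_ h2'
    · exact hI j
    · rw [h1]; exact hI j'
  calc Cardinal.lift.{u₃} #ι' ≤ Cardinal.lift.{u₄} #(ι × ℕ) := Cardinal.lift_mk_le'.mpr ?_
    _ = Cardinal.lift.{u₄} #ι := by
        rw [Cardinal.mk_prod]
        simp [Cardinal.mul_aleph0_eq (Cardinal.aleph0_le_mk ι)]
  · exact hemb


lemma hb_span_eq_top_of_closed {ι : Type u₃} (b : HilbertBasis ι ℂ E)
    (h : IsClosed ((span ℂ (Set.range ⇑b) : Submodule ℂ E) : Set E)) :
    span ℂ (Set.range ⇑b) = ⊤ := by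
  have h1 : ((span ℂ (Set.range ⇑b) : Submodule ℂ E) : Set E) = Set.univ := by
    rw [← h.closure_eq]
    exact (hb_dense b).closure_eq
  rw [Submodule.eq_top_iff']
  intro x
  have : x ∈ ((span ℂ (Set.range ⇑b) : Submodule ℂ E) : Set E) := h1 ▸ Set.mem_univ x
  exact this


lemma infinite_index {ι : Type u₃} (b : HilbertBasis ι ℂ E)
    (h : ¬ FiniteDimensional ℂ E) : Infinite ι := by
  rw [← not_finite_iff_infinite]
  intro hfin
  apply h
  have hsp : FiniteDimensional ℂ ↥(span ℂ (Set.range ⇑b)) :=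
    FiniteDimensional.span_of_finite ℂ (Set.finite_range ⇑b)
  have htop : span ℂ (Set.range ⇑b) = ⊤ :=
    hb_span_eq_top_of_closed b (Submodule.closed_of_finiteDimensional _)
  rw [htop] at hsp
  exact Module.Finite.equiv (Submodule.topEquiv : (⊤ : Submodule ℂ E) ≃ₗ[ℂ] E)


lemma card_eq_of_cle [CompleteSpace E] [CompleteSpace F] {ι : Type u₃} {ι' : Type u₄}
    (b : HilbertBasis ι ℂ E) (c : HilbertBasis ι' ℂ F) (f : E ≃L[ℂ] F) :
    Cardinal.lift.{u₄} #ι = Cardinal.lift.{u₃} #ι' := by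
  by_cases hfd : FiniteDimensional ℂ E
  · haveI := hfd
    haveI : FiniteDimensional ℂ F := Module.Finite.equiv f.toLinearEquiv
    have hbs : span ℂ (Set.range ⇑b) = ⊤ :=
      hb_span_eq_top_of_closed b (Submodule.closed_of_finiteDimensional _)
    have hcs : span ℂ (Set.range ⇑c) = ⊤ :=
      hb_span_eq_top_of_closed c (Submodule.closed_of_finiteDimensional _)
    let B : Module.Basis ι ℂ E := Module.Basis.mk b.orthonormal.linearIndependent (by rw [hbs])
    let C : Module.Basis ι' ℂ F := Module.Basis.mk c.orthonormal.linearIndependent (by rw [hcs])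
    haveI : Fintype ι := FiniteDimensional.fintypeBasisIndex B
    haveI : Fintype ι' := FiniteDimensional.fintypeBasisIndex C
    have e1 : Fintype.card ι = Module.finrank ℂ E :=
      (Module.finrank_eq_card_basis B).symm
    have e2 : Fintype.card ι' = Module.finrank ℂ F :=
      (Module.finrank_eq_card_basis C).symm
    have e3 : Module.finrank ℂ E = Module.finrank ℂ F := f.toLinearEquiv.finrank_eq
    simp [Cardinal.mk_fintype, e1, e2, e3]
  · have hfd' : ¬ FiniteDimensional ℂ F := fun hF =>
      hfd (Module.Finite.equiv f.symm.toLinearEquiv)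
    haveI : Infinite ι := infinite_index b hfd
    haveI : Infinite ι' := infinite_index c hfd'
    exact le_antisymm (card_le_of_cle c b f.symm) (card_le_of_cle b c f)


lemma sub_orthogonalProjection_mem_orthogonal {K : Submodule ℂ E} [K.HasOrthogonalProjection]
    (v : E) : v - (orthogonalProjection K v : E) ∈ Kᗮ :=
  Submodule.sub_starProjection_mem_orthogonal v

end basics

def hSet (E : Type u) [NormedAddCommGroup E] [InnerProductSpace ℂ E] [CompleteSpace E] :
    Set E := (exists_hilbertBasis ℂ E).choose

def hBasis (E : Type u) [NormedAddCommGroup E] [InnerProductSpace ℂ E] [CompleteSpace E] :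
    HilbertBasis (hSet E) ℂ E := (exists_hilbertBasis ℂ E).choose_spec.choose

/-- The Hilbert dimension. -/
def hd (E : Type u) [NormedAddCommGroup E] [InnerProductSpace ℂ E] [CompleteSpace E] :
    Cardinal.{u} := #(hSet E)

section two

variable {E : Type u₁} {F : Type u₂} [NormedAddCommGroup E] [InnerProductSpace ℂ E]
  [NormedAddCommGroup F] [InnerProductSpace ℂ F] [CompleteSpace E] [CompleteSpace F]







lemma hd_eq_of_cle (f : E ≃L[ℂ] F) :
    Cardinal.lift.{u₂} (hd E) = Cardinal.lift.{u₁} (hd F) :=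
  card_eq_of_cle (hBasis E) (hBasis F) f

lemma hd_eq_of_cle' (f : E ≃L[ℂ] F) :
    Cardinal.lift.{max u₂ w} (hd E) = Cardinal.lift.{max u₁ w} (hd F) := by
  have h := congrArg (Cardinal.lift.{w}) (hd_eq_of_cle f)
  rwa [Cardinal.lift_lift, Cardinal.lift_lift] at h

lemma hd_eq_of_cle_same {E F : Type u} [NormedAddCommGroup E] [InnerProductSpace ℂ E]
    [NormedAddCommGroup F] [InnerProductSpace ℂ F] [CompleteSpace E] [CompleteSpace F]
    (f : E ≃L[ℂ] F) : hd E = hd F :=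
  Cardinal.lift_inj.mp (hd_eq_of_cle f)


lemma hd_eq_of_li' (f : E ≃ₗᵢ[ℂ] F) :
    Cardinal.lift.{max u₂ w} (hd E) = Cardinal.lift.{max u₁ w} (hd F) :=
  hd_eq_of_cle' f.toContinuousLinearEquiv


lemma hd_eq_basis {ι : Type u₃} (b : HilbertBasis ι ℂ E) :
    Cardinal.lift.{u₁} #ι = Cardinal.lift.{u₃} (hd E) :=
  card_eq_of_cle b (hBasis E) (ContinuousLinearEquiv.refl ℂ E)


lemma iso_of_hd_eq (h : Cardinal.lift.{u₂} (hd E) = Cardinal.lift.{u₁} (hd F)) :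
    Nonempty (E ≃ₗᵢ[ℂ] F) := by
  obtain ⟨e⟩ := Cardinal.lift_mk_eq'.mp h
  set c := hBasis F with hc
  have hon : Orthonormal ℂ (⇑c ∘ ⇑e) := c.orthonormal.comp _ e.injective
  have hsp : ⊤ ≤ (span ℂ (Set.range (⇑c ∘ ⇑e))).topologicalClosure := by
    have h1 : Set.range (⇑c ∘ ⇑e) = Set.range ⇑c := by
      rw [Set.range_comp, Equiv.range_eq_univ, Set.image_univ]
    rw [h1]
    have h2 : (span ℂ (Set.range ⇑c)).topologicalClosure = ⊤ := by
      apply SetLike.ext'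
      rw [Submodule.topologicalClosure_coe, (hb_dense c).closure_eq, Submodule.top_coe]
    exact le_of_eq h2.symm
  exact ⟨(hBasis E).repr.trans (HilbertBasis.mk hon hsp).repr.symm⟩


end two







lemma hd_decomp {X : Type u} [NormedAddCommGroup X] [InnerProductSpace ℂ X] [CompleteSpace X]
    {U V : Submodule ℂ X} (hUV : U ≤ V) [CompleteSpace ↥U] [CompleteSpace ↥V]
    [CompleteSpace ↥(Uᗮ ⊓ V)] :
    hd ↥V = hd ↥U + hd ↥(Uᗮ ⊓ V) := by
  classical
  set W : Submodule ℂ X := Uᗮ ⊓ V with hW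
  let bU := hBasis ↥U
  let bW := hBasis ↥W
  let v : hSet ↥U ⊕ hSet ↥W → ↥V :=
    Sum.elim (fun i => Submodule.inclusion hUV (bU i))
      (fun i => Submodule.inclusion inf_le_right (bW i))
  have hvU : ∀ i, ((v (Sum.inl i) : ↥V) : X) = ((bU i : ↥U) : X) := fun i => rfl
  have hvW : ∀ i, ((v (Sum.inr i) : ↥V) : X) = ((bW i : ↥W) : X) := fun i => rfl
  have hon : Orthonormal ℂ v := by
    rw [orthonormal_iff_ite]
    intro k l
    have hUon := orthonormal_iff_ite.mp bU.orthonormal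
    have hWon := orthonormal_iff_ite.mp bW.orthonormal
    cases k with
    | inl i =>
      cases l with
      | inl j =>
        have : (⟪v (Sum.inl i), v (Sum.inl j)⟫ : ℂ) = ⟪bU i, bU j⟫ := by
          rw [Submodule.coe_inner, Submodule.coe_inner, hvU i, hvU j]
        rw [this, hUon i j]
        simp
      | inr j =>
        have hmem : ((bW j : ↥W) : X) ∈ Uᗮ := (bW j).2.1
        have : (⟪v (Sum.inl i), v (Sum.inr j)⟫ : ℂ) = 0 := by
          rw [Submodule.coe_inner, hvU i, hvW j]
          exact hmem ((bU i : ↥U) : X) (bU i).2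
        rw [this]
        simp
    | inr i =>
      cases l with
      | inl j =>
        have hmem : ((bW i : ↥W) : X) ∈ Uᗮ := (bW i).2.1
        have : (⟪v (Sum.inr i), v (Sum.inl j)⟫ : ℂ) = 0 := by
          rw [Submodule.coe_inner, hvW i, hvU j, inner_eq_zero_symm]
          exact hmem ((bU j : ↥U) : X) (bU j).2
        rw [this]
        simp
      | inr j =>
        have : (⟪v (Sum.inr i), v (Sum.inr j)⟫ : ℂ) = ⟪bW i, bW j⟫ := by
          rw [Submodule.coe_inner, Submodule.coe_inner, hvW i, hvW j]
        rw [this, hWon i j]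
        simp
  have hbot : (span ℂ (Set.range v))ᗮ = ⊥ := by
    rw [Submodule.eq_bot_iff]
    intro x hx
    have hxo : ∀ k, (⟪v k, x⟫ : ℂ) = 0 := fun k =>
      hx (v k) (Submodule.subset_span (Set.mem_range_self k))
    set y : X := (x : X) with hy
    -- y is orthogonal to U
    have hyU : y ∈ Uᗮ := by
      have hproj : (orthogonalProjection U y) = 0 := by
        refine eq_zero_of_inner_basis bU ?_
        intro i
        rw [inner_orthogonalProjection_eq_of_mem_left, ← hvU i, ← Submodule.coe_inner]
        exact hxo (Sum.inl i)
      have h2 := sub_orthogonalProjection_mem_orthogonal (K := U) y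
      rwa [hproj, ZeroMemClass.coe_zero, sub_zero] at h2
    have hw0 : (⟨y, hyU, x.2⟩ : ↥W) = 0 := by
      refine eq_zero_of_inner_basis bW ?_
      intro i
      rw [Submodule.coe_inner]
      have : ((⟨y, hyU, x.2⟩ : ↥W) : X) = (x : X) := rfl
      rw [this, ← hvW i, ← Submodule.coe_inner]
      exact hxo (Sum.inr i)
    have hy0 : y = 0 := congrArg Subtype.val hw0
    exact Subtype.ext hy0
  let bV : HilbertBasis (hSet ↥U ⊕ hSet ↥W) ℂ ↥V := HilbertBasis.mkOfOrthogonalEqBot hon hbot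
  have hcard := hd_eq_basis (E := ↥V) bV
  rw [Cardinal.mk_sum, Cardinal.lift_id, Cardinal.lift_id, Cardinal.lift_id, Cardinal.lift_id]
    at hcard
  exact hcard.symm

lemma hd_decomp' {X : Type u} [NormedAddCommGroup X] [InnerProductSpace ℂ X] [CompleteSpace X]
    {U V P : Submodule ℂ X} (hUV : U ≤ V) (hP : Uᗮ ⊓ V = P)
    [CompleteSpace ↥U] [CompleteSpace ↥V] [CompleteSpace ↥P] :
    hd ↥V = hd ↥U + hd ↥P := by
  subst hP
  exact hd_decomp hUV

theorem aux
    {H : Type u₁} {K : Type u₂} {M : Type u₃}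
    [NormedAddCommGroup H] [InnerProductSpace ℂ H] [CompleteSpace H]
    [NormedAddCommGroup K] [InnerProductSpace ℂ K] [CompleteSpace K]
    [NormedAddCommGroup M] [InnerProductSpace ℂ M] [CompleteSpace M]
    (T : H →L[ℂ] K) (S : K →L[ℂ] M)
    (hTcl : IsClosed (Set.range T))
    (hTW : Nonempty (↥(LinearMap.ker (T : H →ₗ[ℂ] K)) ≃ₗᵢ[ℂ] ↥((LinearMap.range (T : H →ₗ[ℂ] K))ᗮ)))
    (hScl : IsClosed (Set.range S))
    (hSW : Nonempty (↥(LinearMap.ker (S : K →ₗ[ℂ] M)) ≃ₗᵢ[ℂ] ↥((LinearMap.range (S : K →ₗ[ℂ] M))ᗮ)))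
    (hSTcl : IsClosed (Set.range (S.comp T))) :
    Nonempty (↥(LinearMap.ker (S.comp T : H →ₗ[ℂ] M)) ≃ₗᵢ[ℂ] ↥((LinearMap.range (S.comp T : H →ₗ[ℂ] M))ᗮ)) := by
  classical
  set kT : Submodule ℂ H := LinearMap.ker (T : H →ₗ[ℂ] K) with hkTdef
  set kST : Submodule ℂ H := LinearMap.ker (S.comp T : H →ₗ[ℂ] M) with hkSTdef
  set N : Submodule ℂ K := LinearMap.ker (S : K →ₗ[ℂ] M) with hNdef
  set R : Submodule ℂ K := LinearMap.range (T : H →ₗ[ℂ] K) with hRdef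
  set RS : Submodule ℂ M := LinearMap.range (S : K →ₗ[ℂ] M) with hRSdef
  set RST : Submodule ℂ M := LinearMap.range (S.comp T : H →ₗ[ℂ] M) with hRSTdef
  set A : Submodule ℂ K := N ⊓ R with hAdef
  set W : Submodule ℂ K := N ⊔ R with hWdef
  -- basic inclusions
  have hkTle : kT ≤ kST := by
    intro x hx
    have hx' : T x = 0 := hx
    show S.comp T x = 0
    simp [ContinuousLinearMap.comp_apply, hx']
  have hSTle : RST ≤ RS := by
    rintro y ⟨h, rfl⟩
    exact ⟨T h, rfl⟩
  have hRle : R ≤ W := le_sup_right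
  have hNle : N ≤ W := le_sup_left
  have hAleN : A ≤ N := inf_le_left
  have hAleR : A ≤ R := inf_le_right
  -- W as a preimage
  have hWeq : W = Submodule.comap (S : K →ₗ[ℂ] M) RST := by
    ext x
    simp only [Submodule.mem_comap, hWdef, Submodule.mem_sup]
    constructor
    · rintro ⟨n, hn, r, hr, rfl⟩
      obtain ⟨h, rfl⟩ := hr
      have hn' : S n = 0 := hn
      refine ⟨h, ?_⟩
      show (S.comp T) h = (S : K →ₗ[ℂ] M) (n + T h)
      simp [hn']
    · rintro ⟨h, hh⟩
      refine ⟨x - T h, ?_, T h, ⟨h, rfl⟩, by abel⟩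
      show S (x - T h) = 0
      have : S (T h) = S x := hh
      simp [map_sub, this]
  -- closedness
  have hkTc : IsClosed ((kT : Submodule ℂ H) : Set H) := ContinuousLinearMap.isClosed_ker T
  have hkSTc : IsClosed ((kST : Submodule ℂ H) : Set H) := ContinuousLinearMap.isClosed_ker _
  have hNc : IsClosed ((N : Submodule ℂ K) : Set K) := ContinuousLinearMap.isClosed_ker S
  have hRc : IsClosed ((R : Submodule ℂ K) : Set K) := by
    rw [hRdef, LinearMap.coe_range]; exact hTcl
  have hRSc : IsClosed ((RS : Submodule ℂ M) : Set M) := by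
    rw [hRSdef, LinearMap.coe_range]; exact hScl
  have hRSTc : IsClosed ((RST : Submodule ℂ M) : Set M) := by
    rw [hRSTdef, LinearMap.coe_range]; exact hSTcl
  have hAc : IsClosed ((A : Submodule ℂ K) : Set K) := by
    rw [hAdef, Submodule.coe_inf]; exact hNc.inter hRc
  have hWc : IsClosed ((W : Submodule ℂ K) : Set K) := by
    rw [hWeq, Submodule.comap_coe]
    exact hRSTc.preimage S.continuous
  -- completeness instances
  haveI : CompleteSpace ↥kT := hkTc.completeSpace_coe
  haveI : CompleteSpace ↥kST := hkSTc.completeSpace_coe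
  haveI : CompleteSpace ↥N := hNc.completeSpace_coe
  haveI : CompleteSpace ↥R := hRc.completeSpace_coe
  haveI : CompleteSpace ↥RS := hRSc.completeSpace_coe
  haveI : CompleteSpace ↥RST := hRSTc.completeSpace_coe
  haveI : CompleteSpace ↥A := hAc.completeSpace_coe
  haveI : CompleteSpace ↥W := hWc.completeSpace_coe
  haveI : CompleteSpace ↥(kTᗮ ⊓ kST) :=
    (IsClosed.inter kT.isClosed_orthogonal hkSTc).completeSpace_coe
  haveI : CompleteSpace ↥(Aᗮ ⊓ N) :=
    (IsClosed.inter A.isClosed_orthogonal hNc).completeSpace_coe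
  haveI : CompleteSpace ↥(Rᗮ) := R.isClosed_orthogonal.completeSpace_coe
  haveI : CompleteSpace ↥(Wᗮ) := W.isClosed_orthogonal.completeSpace_coe
  haveI : CompleteSpace ↥(RSᗮ) := RS.isClosed_orthogonal.completeSpace_coe
  haveI : CompleteSpace ↥(RSTᗮ) := RST.isClosed_orthogonal.completeSpace_coe
  haveI : CompleteSpace ↥(W ⊓ Rᗮ) :=
    (IsClosed.inter hWc R.isClosed_orthogonal).completeSpace_coe
  haveI : CompleteSpace ↥(RS ⊓ RSTᗮ) :=
    (IsClosed.inter hRSc RST.isClosed_orthogonal).completeSpace_coe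
  -- CLE1 : (kTᗮ ⊓ kST) ≃L A
  have hg1mem : ∀ x : ↥(kTᗮ ⊓ kST), T.comp (kTᗮ ⊓ kST).subtypeL x ∈ A := by
    intro x
    refine Submodule.mem_inf.mpr ⟨?_, ⟨(x : H), rfl⟩⟩
    show S (T (x : H)) = 0
    exact x.2.2
  set g1 : ↥(kTᗮ ⊓ kST) →L[ℂ] ↥A :=
    ContinuousLinearMap.codRestrict (T.comp (kTᗮ ⊓ kST).subtypeL) A hg1mem with hg1def
  have hg1coe : ∀ x : ↥(kTᗮ ⊓ kST), ((g1 x : ↥A) : K) = T (x : H) := fun x => rfl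
  have hg1ker : LinearMap.ker (g1 : ↥(kTᗮ ⊓ kST) →ₗ[ℂ] ↥A) = ⊥ := by
    rw [Submodule.eq_bot_iff]
    intro x hx
    have hx0 : T (x : H) = 0 := by
      have := congrArg (fun z : ↥A => (z : K)) (LinearMap.mem_ker.mp hx)
      simpa [hg1coe] using this
    have hxker : (x : H) ∈ kT := hx0
    have hxo : (x : H) ∈ kTᗮ := (Submodule.mem_inf.mp x.2).1
    have : (x : H) = 0 :=
      Submodule.disjoint_def.mp (Submodule.orthogonal_disjoint kT) (x : H) hxker hxo
    exact Subtype.ext this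
  have hg1sur : LinearMap.range (g1 : ↥(kTᗮ ⊓ kST) →ₗ[ℂ] ↥A) = ⊤ := by
    rw [LinearMap.range_eq_top, ContinuousLinearMap.coe_coe]
    intro y
    obtain ⟨h0, hh0⟩ := (Submodule.mem_inf.mp y.2).2
    obtain ⟨p, hp, q, hq, hpq⟩ := Submodule.exists_add_mem_mem_orthogonal (K := kT) h0
    have hTq : T q = (y : K) := by
      have : T h0 = T p + T q := by rw [hpq, map_add]
      have hp0 : T p = 0 := hp
      rw [← show T h0 = (y : K) from hh0, this, hp0, zero_add]
    have hqkST : q ∈ kST := by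
      show S (T q) = 0
      rw [hTq]
      exact (Submodule.mem_inf.mp y.2).1
    refine ⟨⟨q, Submodule.mem_inf.mpr ⟨hq, hqkST⟩⟩, ?_⟩
    apply Subtype.ext
    rw [hg1coe]
    exact hTq
  have e1 : ↥(kTᗮ ⊓ kST) ≃L[ℂ] ↥A := ContinuousLinearEquiv.ofBijective g1 hg1ker hg1sur
  -- CLE2 : (Aᗮ ⊓ N) ≃L (W ⊓ Rᗮ)
  have hg2mem : ∀ x : ↥(Aᗮ ⊓ N),
      (Rᗮ.subtypeL.comp (orthogonalProjection Rᗮ)).comp (Aᗮ ⊓ N).subtypeL x ∈ W ⊓ Rᗮ := by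
    intro x
    refine Submodule.mem_inf.mpr ⟨?_, Submodule.coe_mem _⟩
    have hsub : (x : K) - (orthogonalProjection Rᗮ (x : K) : K) ∈ R := by
      have := sub_orthogonalProjection_mem_orthogonal (K := Rᗮ) (x : K)
      rwa [Submodule.orthogonal_orthogonal] at this
    have hxW : (x : K) ∈ W := hNle (Submodule.mem_inf.mp x.2).2
    have : ((orthogonalProjection Rᗮ (x : K) : K)) =
        (x : K) - ((x : K) - (orthogonalProjection Rᗮ (x : K) : K)) := by abel
    rw [show ((Rᗮ.subtypeL.comp (orthogonalProjection Rᗮ)).comp (Aᗮ ⊓ N).subtypeL x : K)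
        = (orthogonalProjection Rᗮ (x : K) : K) from rfl, this]
    exact W.sub_mem hxW (hRle hsub)
  set g2 : ↥(Aᗮ ⊓ N) →L[ℂ] ↥(W ⊓ Rᗮ) :=
    ContinuousLinearMap.codRestrict _ (W ⊓ Rᗮ) hg2mem with hg2def
  have hg2coe : ∀ x : ↥(Aᗮ ⊓ N), ((g2 x : ↥(W ⊓ Rᗮ)) : K)
      = (orthogonalProjection Rᗮ (x : K) : K) := fun x => rfl
  have hg2ker : LinearMap.ker (g2 : ↥(Aᗮ ⊓ N) →ₗ[ℂ] ↥(W ⊓ Rᗮ)) = ⊥ := by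
    rw [Submodule.eq_bot_iff]
    intro x hx
    have hx0 : (orthogonalProjection Rᗮ (x : K) : K) = 0 := by
      have := congrArg (fun z : ↥(W ⊓ Rᗮ) => (z : K)) (LinearMap.mem_ker.mp hx)
      simpa [hg2coe] using this
    have hxR : (x : K) ∈ R := by
      have := sub_orthogonalProjection_mem_orthogonal (K := Rᗮ) (x : K)
      rw [Submodule.orthogonal_orthogonal, hx0, sub_zero] at this
      exact this
    have hxA : (x : K) ∈ A := Submodule.mem_inf.mpr ⟨(Submodule.mem_inf.mp x.2).2, hxR⟩
    have : (x : K) = 0 :=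
      Submodule.disjoint_def.mp (Submodule.orthogonal_disjoint A) (x : K) hxA
        (Submodule.mem_inf.mp x.2).1
    exact Subtype.ext this
  have hg2sur : LinearMap.range (g2 : ↥(Aᗮ ⊓ N) →ₗ[ℂ] ↥(W ⊓ Rᗮ)) = ⊤ := by
    rw [LinearMap.range_eq_top, ContinuousLinearMap.coe_coe]
    intro y
    obtain ⟨n, hn, r, hr, hnr⟩ := Submodule.mem_sup.mp (Submodule.mem_inf.mp y.2).1
    set a : K := (orthogonalProjection A n : K) with hadef
    have hqA : n - a ∈ Aᗮ := sub_orthogonalProjection_mem_orthogonal n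
    have hqN : n - a ∈ N := N.sub_mem hn (hAleN (Submodule.coe_mem _))
    refine ⟨⟨n - a, Submodule.mem_inf.mpr ⟨hqA, hqN⟩⟩, ?_⟩
    apply Subtype.ext
    rw [hg2coe]
    have hyR : (y : K) ∈ Rᗮ := (Submodule.mem_inf.mp y.2).2
    have h1 : orthogonalProjection Rᗮ (y : K) = ⟨(y : K), hyR⟩ :=
      orthogonalProjection_mem_subspace_eq_self (⟨(y : K), hyR⟩ : ↥Rᗮ)
    have h2 : orthogonalProjection Rᗮ r = 0 :=
      orthogonalProjection_mem_subspace_orthogonalComplement_eq_zero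
        (R.le_orthogonal_orthogonal hr)
    have h3 : orthogonalProjection Rᗮ a = 0 :=
      orthogonalProjection_mem_subspace_orthogonalComplement_eq_zero
        (R.le_orthogonal_orthogonal (hAleR (Submodule.coe_mem _)))
    have hn' : (n : K) = (y : K) - r := by rw [← hnr]; abel
    show ((orthogonalProjection Rᗮ (n - a) : K)) = (y : K)
    rw [map_sub, hn', map_sub, h1, h2, h3]
    simp
  have e2 : ↥(Aᗮ ⊓ N) ≃L[ℂ] ↥(W ⊓ Rᗮ) := ContinuousLinearEquiv.ofBijective g2 hg2ker hg2sur
  -- CLE3 : Wᗮ ≃L (RS ⊓ RSTᗮ)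
  have hg3mem : ∀ x : ↥Wᗮ,
      (RSTᗮ.subtypeL.comp (orthogonalProjection RSTᗮ)).comp (S.comp Wᗮ.subtypeL) x
        ∈ RS ⊓ RSTᗮ := by
    intro x
    refine Submodule.mem_inf.mpr ⟨?_, Submodule.coe_mem _⟩
    have hsub : S (x : K) - (orthogonalProjection RSTᗮ (S (x : K)) : M) ∈ RST := by
      have := sub_orthogonalProjection_mem_orthogonal (K := RSTᗮ) (S (x : K))
      rwa [Submodule.orthogonal_orthogonal] at this
    have hSx : S (x : K) ∈ RS := ⟨(x : K), rfl⟩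
    have heq : ((orthogonalProjection RSTᗮ (S (x : K)) : M)) =
        S (x : K) - (S (x : K) - (orthogonalProjection RSTᗮ (S (x : K)) : M)) := by abel
    rw [show ((RSTᗮ.subtypeL.comp (orthogonalProjection RSTᗮ)).comp (S.comp Wᗮ.subtypeL) x)
        = (orthogonalProjection RSTᗮ (S (x : K)) : M) from rfl, heq]
    exact RS.sub_mem hSx (hSTle hsub)
  set g3 : ↥Wᗮ →L[ℂ] ↥(RS ⊓ RSTᗮ) :=
    ContinuousLinearMap.codRestrict _ (RS ⊓ RSTᗮ) hg3mem with hg3def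
  have hg3coe : ∀ x : ↥Wᗮ, ((g3 x : ↥(RS ⊓ RSTᗮ)) : M)
      = (orthogonalProjection RSTᗮ (S (x : K)) : M) := fun x => rfl
  have hg3ker : LinearMap.ker (g3 : ↥Wᗮ →ₗ[ℂ] ↥(RS ⊓ RSTᗮ)) = ⊥ := by
    rw [Submodule.eq_bot_iff]
    intro x hx
    have hx0 : (orthogonalProjection RSTᗮ (S (x : K)) : M) = 0 := by
      have := congrArg (fun z : ↥(RS ⊓ RSTᗮ) => (z : M)) (LinearMap.mem_ker.mp hx)
      simpa [hg3coe] using this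
    have hmem : S (x : K) ∈ RST := by
      have := sub_orthogonalProjection_mem_orthogonal (K := RSTᗮ) (S (x : K))
      rw [Submodule.orthogonal_orthogonal, hx0, sub_zero] at this
      exact this
    have hxW : (x : K) ∈ W := by
      have hm2 : (x : K) ∈ comap (S : K →ₗ[ℂ] M) RST := hmem
      rwa [← hWeq] at hm2
    have : (x : K) = 0 :=
      Submodule.disjoint_def.mp (Submodule.orthogonal_disjoint W) (x : K) hxW x.2
    exact Subtype.ext this
  have hg3sur : LinearMap.range (g3 : ↥Wᗮ →ₗ[ℂ] ↥(RS ⊓ RSTᗮ)) = ⊤ := by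
    rw [LinearMap.range_eq_top, ContinuousLinearMap.coe_coe]
    intro y
    obtain ⟨k, hk⟩ := (Submodule.mem_inf.mp y.2).1
    obtain ⟨p, hp, q, hq, hpq⟩ := Submodule.exists_add_mem_mem_orthogonal (K := W) k
    refine ⟨⟨q, hq⟩, ?_⟩
    apply Subtype.ext
    rw [hg3coe]
    have hSp : S p ∈ RST := by
      have hp' : p ∈ comap (S : K →ₗ[ℂ] M) RST := by rw [← hWeq]; exact hp
      exact hp'
    have h2 : orthogonalProjection RSTᗮ (S p) = 0 :=
      orthogonalProjection_mem_subspace_orthogonalComplement_eq_zero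
        (RST.le_orthogonal_orthogonal hSp)
    have hyO : (y : M) ∈ RSTᗮ := (Submodule.mem_inf.mp y.2).2
    have h1 : orthogonalProjection RSTᗮ (S k) = ⟨(y : M), hyO⟩ := by
      rw [show S k = (y : M) from hk]
      exact orthogonalProjection_mem_subspace_eq_self (⟨(y : M), hyO⟩ : ↥RSTᗮ)
    have hq' : (q : K) = k - p := by rw [hpq]; abel
    show ((orthogonalProjection RSTᗮ (S q) : M)) = (y : M)
    rw [hq', map_sub, map_sub, h1, h2]
    simp
  have e3 : ↥Wᗮ ≃L[ℂ] ↥(RS ⊓ RSTᗮ) := ContinuousLinearEquiv.ofBijective g3 hg3ker hg3sur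
  -- dimension bookkeeping
  have E1 : hd ↥kST = hd ↥kT + hd ↥(kTᗮ ⊓ kST) := hd_decomp hkTle
  have E2 : hd ↥N = hd ↥A + hd ↥(Aᗮ ⊓ N) := hd_decomp hAleN
  have E3 : hd ↥Rᗮ = hd ↥Wᗮ + hd ↥(W ⊓ Rᗮ) :=
    hd_decomp' (Submodule.orthogonal_le hRle) (by rw [Submodule.orthogonal_orthogonal])
  have E4 : hd ↥RSTᗮ = hd ↥RSᗮ + hd ↥(RS ⊓ RSTᗮ) :=
    hd_decomp' (Submodule.orthogonal_le hSTle) (by rw [Submodule.orthogonal_orthogonal])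
  have C1 : Cardinal.lift.{max u₂ u₃} (hd ↥(kTᗮ ⊓ kST)) = Cardinal.lift.{max u₁ u₃} (hd ↥A) :=
    hd_eq_of_cle' e1
  have HW1 : Cardinal.lift.{max u₂ u₃} (hd ↥kT) = Cardinal.lift.{max u₁ u₃} (hd ↥Rᗮ) :=
    hd_eq_of_li' hTW.some
  have C2 : hd ↥(Aᗮ ⊓ N) = hd ↥(W ⊓ Rᗮ) := hd_eq_of_cle_same e2
  have C3 : Cardinal.lift.{max u₁ u₃} (hd ↥Wᗮ) = Cardinal.lift.{max u₁ u₂} (hd ↥(RS ⊓ RSTᗮ)) :=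
    hd_eq_of_cle' e3
  have HW2 : Cardinal.lift.{max u₁ u₃} (hd ↥N) = Cardinal.lift.{max u₁ u₂} (hd ↥RSᗮ) :=
    hd_eq_of_li' hSW.some
  have main : Cardinal.lift.{max u₂ u₃} (hd ↥kST) = Cardinal.lift.{max u₁ u₂} (hd ↥RSTᗮ) := by
    calc Cardinal.lift.{max u₂ u₃} (hd ↥kST)
        = Cardinal.lift.{max u₂ u₃} (hd ↥kT)
          + Cardinal.lift.{max u₂ u₃} (hd ↥(kTᗮ ⊓ kST)) := by
          rw [E1, Cardinal.lift_add]
      _ = Cardinal.lift.{max u₁ u₃} (hd ↥Rᗮ) + Cardinal.lift.{max u₁ u₃} (hd ↥A) := by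
          rw [HW1, C1]
      _ = Cardinal.lift.{max u₁ u₃} (hd ↥Wᗮ)
          + (Cardinal.lift.{max u₁ u₃} (hd ↥A)
            + Cardinal.lift.{max u₁ u₃} (hd ↥(Aᗮ ⊓ N))) := by
          rw [E3, C2, Cardinal.lift_add]
          ring
      _ = Cardinal.lift.{max u₁ u₃} (hd ↥Wᗮ) + Cardinal.lift.{max u₁ u₃} (hd ↥N) := by
          rw [← Cardinal.lift_add, ← E2]
      _ = Cardinal.lift.{max u₁ u₂} (hd ↥(RS ⊓ RSTᗮ)) + Cardinal.lift.{max u₁ u₂} (hd ↥RSᗮ) := by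
          rw [C3, HW2]
      _ = Cardinal.lift.{max u₁ u₂} (hd ↥RSTᗮ) := by
          rw [add_comm, ← Cardinal.lift_add, ← E4]
  refine iso_of_hd_eq ?_
  have main2 : Cardinal.lift.{u₂} (Cardinal.lift.{u₃} (hd ↥kST))
      = Cardinal.lift.{u₂} (Cardinal.lift.{u₁} (hd ↥RSTᗮ)) := by
    rw [Cardinal.lift_lift, Cardinal.lift_lift]
    exact main
  exact Cardinal.lift_injective main2


end GWAux
end GWAux

/-- Let `T ∈ B(H,K)` and `S ∈ B(K,M)` be generalized Weyl operators between
Hilbert spaces (closed range, kernel isometrically isomorphic to the orthogonal complement of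
the range, i.e. equal Hilbert dimensions of kernel and cokernel), and suppose `R(ST)` is
closed. Then `ST` is a generalized Weyl operator. -/
theorem generalizedWeyl_comp_hilbert
    {H K M : Type*} [NormedAddCommGroup H] [InnerProductSpace ℂ H] [CompleteSpace H]
    [NormedAddCommGroup K] [InnerProductSpace ℂ K] [CompleteSpace K]
    [NormedAddCommGroup M] [InnerProductSpace ℂ M] [CompleteSpace M]
    (T : H →L[ℂ] K) (S : K →L[ℂ] M)
    (hTcl : IsClosed (Set.range T))
    (hTW : Nonempty (↥(LinearMap.ker (T : H →ₗ[ℂ] K)) ≃ₗᵢ[ℂ] ↥((LinearMap.range (T : H →ₗ[ℂ] K))ᗮ)))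
    (hScl : IsClosed (Set.range S))
    (hSW : Nonempty (↥(LinearMap.ker (S : K →ₗ[ℂ] M)) ≃ₗᵢ[ℂ] ↥((LinearMap.range (S : K →ₗ[ℂ] M))ᗮ)))
    (hSTcl : IsClosed (Set.range (S.comp T))) :
    Nonempty (↥(LinearMap.ker (S.comp T : H →ₗ[ℂ] M)) ≃ₗᵢ[ℂ] ↥((LinearMap.range (S.comp T : H →ₗ[ℂ] M))ᗮ)) := by
  exact GWAux.aux T S hTcl hTW hScl hSW hSTcl
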